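/- Let G be a topological group, U a symmetric neighbourhood of the identity, and T a right U-uniformly discrete subset of G. If L is a relatively compact subset of G and for every finite F ⊆ L the set ⋂_{b ∈ F} b⁻¹T is infinite, then for each s ∈ G the set L ∩ Us contains at most one point; consequently L is finite whenever L is covered by finitely many right translates of U. -/

import Mathlib

open Pointwise

/-- Key step of Proposition 3.6: if `T` is right `U`-uniformly discrete, `L` is relatively
compact, and all finite intersections `⋂_{b ∈ F} b⁻¹T` (for finite `F ⊆ L`) are infinite, then
every set `L ∩ Us` has at most one point; consequently `L` is finite whenever it is covered by
finitely many right translates of `U`. -/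
theorem uniformly_discrete_key_step {G : Type*} [Group G] [TopologicalSpace G]
    [IsTopologicalGroup G]
    (U : Set G) (hU : U ∈ nhds (1 : G)) (hUsymm : U⁻¹ = U)
    (T : Set G)
    (hdisc : ∀ t ∈ T, ∀ t' ∈ T, t ≠ t' → Disjoint (U * ({t} : Set G)) (U * ({t'} : Set G)))
    (L : Set G) (hL : IsCompact (closure L))
    (hLT : ∀ F : Set G, F ⊆ L → F.Finite → (⋂ b ∈ F, (b * ·) ⁻¹' T).Infinite) :
    (∀ s : G, (L ∩ (U * ({s} : Set G))).Subsingleton) ∧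
      (∀ S : Finset G, L ⊆ ⋃ s ∈ S, U * ({s} : Set G) → L.Finite) := by
  have key : ∀ s : G, (L ∩ (U * ({s} : Set G))).Subsingleton := by
    intro s a ha b hb
    have haL := ha.1
    have hbL := hb.1
    obtain ⟨u, hu, x, hx, hus⟩ := Set.mem_mul.1 ha.2
    obtain ⟨v, hv, y, hy, hvs⟩ := Set.mem_mul.1 hb.2
    rw [Set.mem_singleton_iff] at hx hy
    subst hx hy
    -- get c in the intersection for F = {a, b}
    have hF : ({a, b} : Set G) ⊆ L := by
      intro z hz; rcases hz with rfl | rfl; exacts [haL, hbL]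
    obtain ⟨c, hc⟩ := (hLT {a, b} hF (Set.toFinite _)).nonempty
    simp only [Set.mem_iInter, Set.mem_preimage] at hc
    have hac : a * c ∈ T := hc a (Or.inl rfl)
    have hbc : b * c ∈ T := hc b (Or.inr rfl)
    by_contra hne
    have hne' : a * c ≠ b * c := fun h => hne (mul_right_cancel h)
    have hdisj := hdisc _ hac _ hbc hne'
    have hmemU : ∀ w : G, w ∈ U → w⁻¹ ∈ U := by
      intro w hw; rw [← hUsymm]; exact Set.inv_mem_inv.2 hw
    have h1 : y * c ∈ U * ({a * c} : Set G) := by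
      refine Set.mem_mul.2 ⟨u⁻¹, hmemU u hu, a * c, rfl, ?_⟩
      rw [← hus]; group
    have h2 : y * c ∈ U * ({b * c} : Set G) := by
      refine Set.mem_mul.2 ⟨v⁻¹, hmemU v hv, b * c, rfl, ?_⟩
      rw [← hvs]; group
    exact (hdisj.ne_of_mem h1 h2) rfl
  refine ⟨key, fun S hS => ?_⟩
  have : L = ⋃ s ∈ S, L ∩ (U * ({s} : Set G)) := by
    ext z; simp only [Set.mem_iUnion, Set.mem_inter_iff]
    constructor
    · intro hz
      obtain ⟨s, hsS, hzs⟩ := Set.mem_iUnion₂.1 (hS hz)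
      exact ⟨s, hsS, hz, hzs⟩
    · rintro ⟨s, _, hz, _⟩; exact hz
  rw [this]
  exact Set.Finite.biUnion S.finite_toSet fun s _ => (key s).finite
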